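/- Let G be a group with a G-invariant σ-algebra, μ a probability measure on G, and (α_n)_{n≥0} non-negative reals with Σ α_n = 1 and α_1 > 0. Let θ = Σ_{n≥0} α_n μ^{*n}. Then H^∞(G,μ) = H^∞(G,θ): a bounded measurable function is μ-harmonic if and only if it is θ-harmonic. -/

import Mathlib

open MeasureTheory Filter ProbabilityTheory
open scoped ENNReal NNReal

noncomputable def mconv {G : Type*} [Mul G] [MeasurableSpace G] (μ ν : Measure G) : Measure G :=
  (μ.prod ν).map (fun p => p.1 * p.2)

noncomputable def mconvPow {G : Type*} [Monoid G] [MeasurableSpace G] (μ : Measure G) : ℕ → Measure G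
  | 0 => Measure.dirac 1
  | n+1 => mconv (mconvPow μ n) μ

noncomputable def tvDist {α : Type*} [MeasurableSpace α] (μ ν : Measure α) : ℝ :=
  ⨆ A : Set α, |(μ A).toReal - (ν A).toReal|

noncomputable def tildeMeasure {G : Type*} [Monoid G] [MeasurableSpace G] (μ : Measure G) : Measure G :=
  Measure.sum (fun n => ((2:ℝ≥0∞)^(n+1))⁻¹ • mconvPow μ n)

set_option linter.unusedSectionVars false

section aux
variable {G : Type*} [Group G] [MeasurableSpace G] [MeasurableMul₂ G]

lemma int_bdd {α : Type*} [MeasurableSpace α] {E : Type*} [NormedAddCommGroup E]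
    {ν : Measure α} [IsFiniteMeasure ν] {f : α → E} (hf : AEStronglyMeasurable f ν)
    {C : ℝ} (hb : ∀ x, ‖f x‖ ≤ C) : Integrable f ν :=
  (integrable_const C).mono' hf (ae_of_all _ hb)

lemma mconvPow_prob (μ : Measure G) [IsProbabilityMeasure μ] (n : ℕ) :
    IsProbabilityMeasure (mconvPow μ n) := by
  induction n with
  | zero => exact Measure.dirac.isProbabilityMeasure
  | succ n ih =>
    rw [mconvPow, mconv]
    exact Measure.isProbabilityMeasure_map measurable_mul.aemeasurable

attribute [local instance] mconvPow_prob

noncomputable def Tk (μ : Measure G) (f : G → ℝ) : G → ℝ := fun g => ∫ γ, f (g * γ) ∂μ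

variable (μ : Measure G) [IsProbabilityMeasure μ]

lemma Tk_meas {f : G → ℝ} (hf : Measurable f) : Measurable (Tk μ f) :=
  ((hf.comp measurable_mul).stronglyMeasurable).integral_prod_right'.measurable

lemma Tk_bdd {f : G → ℝ} {C : ℝ} (hb : ∀ x, |f x| ≤ C) (g : G) : |Tk μ f g| ≤ C := by
  have := norm_integral_le_of_norm_le_const (μ := μ) (f := fun γ => f (g * γ)) (C := C)
    (ae_of_all _ fun γ => hb (g * γ))
  simpa [Tk] using this

lemma Tk_iter_meas {f : G → ℝ} (hf : Measurable f) (n : ℕ) : Measurable ((Tk μ)^[n] f) := by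
  induction n with
  | zero => exact hf
  | succ n ih => rw [Function.iterate_succ_apply']; exact Tk_meas μ ih

lemma Tk_iter_bdd {f : G → ℝ} {C : ℝ} (hb : ∀ x, |f x| ≤ C) (n : ℕ) (g : G) :
    |(Tk μ)^[n] f g| ≤ C := by
  induction n generalizing g with
  | zero => exact hb g
  | succ n ih => rw [Function.iterate_succ_apply']; exact Tk_bdd μ ih g

lemma Tk_le_const {f : G → ℝ} (hf : Measurable f) {C : ℝ} (hb : ∀ x, |f x| ≤ C)
    {c : ℝ} (hc : ∀ x, f x ≤ c) (g : G) : Tk μ f g ≤ c := by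
  have h1 : Integrable (fun γ => f (g * γ)) μ :=
    int_bdd ((hf.comp (measurable_const_mul g)).aestronglyMeasurable)
      (fun x => by simpa using hb (g * x))
  calc Tk μ f g ≤ ∫ _γ, c ∂μ := integral_mono h1 (integrable_const c) (fun γ => hc (g * γ))
  _ = c := by simp

lemma Tk_neg (f : G → ℝ) : Tk μ (fun x => - f x) = fun g => - Tk μ f g := by
  funext g; exact integral_neg _

lemma Tk_iter_neg (f : G → ℝ) (n : ℕ) :
    (Tk μ)^[n] (fun x => - f x) = fun g => - (Tk μ)^[n] f g := by
  induction n with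
  | zero => rfl
  | succ n ih =>
    rw [Function.iterate_succ_apply', Function.iterate_succ_apply', ih, Tk_neg]

lemma Tk_sub {f₁ f₂ : G → ℝ} (hf₁ : Measurable f₁) {C₁ : ℝ} (hb₁ : ∀ x, |f₁ x| ≤ C₁)
    (hf₂ : Measurable f₂) {C₂ : ℝ} (hb₂ : ∀ x, |f₂ x| ≤ C₂) :
    Tk μ (fun x => f₁ x - f₂ x) = fun g => Tk μ f₁ g - Tk μ f₂ g := by
  funext g
  exact integral_sub
    (int_bdd ((hf₁.comp (measurable_const_mul g)).aestronglyMeasurable)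
      (fun x => by simpa using hb₁ (g * x)))
    (int_bdd ((hf₂.comp (measurable_const_mul g)).aestronglyMeasurable)
      (fun x => by simpa using hb₂ (g * x)))

/-- integral against a convolution -/
lemma integral_mconv {f : G → ℝ} (hf : Measurable f) {C : ℝ} (hb : ∀ x, |f x| ≤ C)
    (P : Measure G) [IsProbabilityMeasure P] (g : G) :
    ∫ γ, f (g * γ) ∂(mconv P μ) = ∫ a, Tk μ f (g * a) ∂P := by
  have hm : Measurable fun γ : G => f (g * γ) := hf.comp (measurable_const_mul g)
  rw [mconv, integral_map measurable_mul.aemeasurable hm.aestronglyMeasurable]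
  have hint : Integrable (fun p : G × G => f (g * (p.1 * p.2))) (P.prod μ) :=
    int_bdd ((hf.comp ((measurable_fst.mul measurable_snd).const_mul g)).aestronglyMeasurable)
      (fun x => by simpa using hb _)
  rw [MeasureTheory.integral_prod _ hint]
  simp only [Tk, mul_assoc]

lemma integral_mconvPow {f : G → ℝ} (hf : Measurable f) {C : ℝ} (hb : ∀ x, |f x| ≤ C)
    (n : ℕ) (g : G) :
    ∫ γ, f (g * γ) ∂(mconvPow μ n) = (Tk μ)^[n] f g := by
  induction n generalizing f with
  | zero =>
    rw [mconvPow]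
    have hm : Measurable fun γ : G => f (g * γ) := hf.comp (measurable_const_mul g)
    rw [integral_dirac' _ _ hm.stronglyMeasurable]
    simp
  | succ n ih =>
    rw [mconvPow, integral_mconv μ hf hb]
    have := ih (f := Tk μ f) (Tk_meas μ hf) (Tk_bdd μ hb) -- : ∫ over mconvPow n of Tk f
    rw [this, ← Function.iterate_succ_apply]
end aux


section aux2
variable {G : Type*} [Group G] [MeasurableSpace G] [MeasurableMul₂ G]
attribute [local instance] mconvPow_prob
variable (μ : Measure G) [IsProbabilityMeasure μ]
variable {α : ℕ → ℝ} (hα : ∀ n, 0 ≤ α n) (hsum : ∑' n, α n = 1)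

include hα hsum

lemma summable_alpha : Summable α := by
  by_contra hc
  rw [tsum_eq_zero_of_not_summable hc] at hsum
  norm_num at hsum

lemma theta_prob : IsProbabilityMeasure
    (Measure.sum (fun n => ENNReal.ofReal (α n) • mconvPow μ n) : Measure G) := by
  constructor
  rw [Measure.sum_apply _ MeasurableSet.univ]
  simp only [Measure.smul_apply, smul_eq_mul, measure_univ, mul_one]
  rw [← ENNReal.ofReal_tsum_of_nonneg hα (summable_alpha hα hsum), hsum]
  norm_num

lemma integral_theta {f : G → ℝ} (hf : Measurable f) {C : ℝ} (hb : ∀ x, |f x| ≤ C) (g : G) :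
    ∫ γ, f (g * γ) ∂(Measure.sum (fun n => ENNReal.ofReal (α n) • mconvPow μ n) : Measure G)
      = ∑' n, α n * (Tk μ)^[n] f g := by
  have hP := theta_prob μ hα hsum
  have hm : Measurable fun γ : G => f (g * γ) := hf.comp (measurable_const_mul g)
  have hint : Integrable (fun γ => f (g * γ))
      (Measure.sum (fun n => ENNReal.ofReal (α n) • mconvPow μ n) : Measure G) :=
    int_bdd hm.aestronglyMeasurable (fun x => by simpa using hb (g * x))
  rw [integral_sum_measure hint]
  congr 1
  funext n
  rw [integral_smul_measure, ENNReal.toReal_ofReal (hα n),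
    integral_mconvPow μ hf hb, smul_eq_mul]
end aux2

section aux3
variable {G : Type*} [Group G] [MeasurableSpace G] [MeasurableMul₂ G]
attribute [local instance] mconvPow_prob
variable (μ : Measure G) [IsProbabilityMeasure μ]
variable {α : ℕ → ℝ} (hα : ∀ n, 0 ≤ α n) (hsum : ∑' n, α n = 1)

/-- the fixed point property for the series operator -/
def Pfix (μ : Measure G) (α : ℕ → ℝ) (f : G → ℝ) : Prop :=
  ∀ g, f g = ∑' n, α n * (Tk μ)^[n] f g

include hα hsum

lemma summable_term {f : G → ℝ} {C : ℝ} (hb : ∀ x, |f x| ≤ C) (g : G) :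
    Summable (fun n => α n * (Tk μ)^[n] f g) := by
  refine Summable.of_norm_bounded (g := fun n => α n * C)
    (((summable_alpha hα hsum)).mul_right C) (fun n => ?_)
  rw [Real.norm_eq_abs, abs_mul, abs_of_nonneg (hα n)]
  exact mul_le_mul_of_nonneg_left (Tk_iter_bdd μ hb n g) (hα n)

omit hα hsum in
lemma C_nonneg {f : G → ℝ} {C : ℝ} (hb : ∀ x, |f x| ≤ C) : 0 ≤ C :=
  le_trans (abs_nonneg _) (hb 1)

lemma Pfix_T {f : G → ℝ} (hf : Measurable f) {C : ℝ} (hb : ∀ x, |f x| ≤ C)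
    (hP : Pfix μ α f) : Pfix μ α (Tk μ f) := by
  intro g
  have hC : 0 ≤ C := C_nonneg hb
  have h1 : Tk μ f g = ∫ γ, (∑' n, α n * (Tk μ)^[n] f (g * γ)) ∂μ := by
    unfold Tk; congr 1; funext γ; exact hP (g * γ)
  have hmn : ∀ n : ℕ, AEStronglyMeasurable (fun γ => α n * (Tk μ)^[n] f (g * γ)) μ := fun n =>
    (measurable_const.mul ((Tk_iter_meas μ hf n).comp (measurable_const_mul g))).aestronglyMeasurable
  rw [h1, integral_tsum hmn ?_]
  · congr 1
    funext n
    rw [integral_const_mul]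
    have : ∫ γ, (Tk μ)^[n] f (g * γ) ∂μ = Tk μ ((Tk μ)^[n] f) g := rfl
    rw [this, show Tk μ ((Tk μ)^[n] f) = (Tk μ)^[n+1] f from
      (Function.iterate_succ_apply' _ _ _).symm, Function.iterate_succ_apply]
  · refine ne_top_of_le_ne_top (b := ENNReal.ofReal C) ?_ ?_
    · exact ENNReal.ofReal_ne_top
    · calc ∑' n, ∫⁻ γ, ‖α n * (Tk μ)^[n] f (g * γ)‖₊ ∂μ
          ≤ ∑' n, ENNReal.ofReal (α n * C) := by
            refine ENNReal.tsum_le_tsum (fun n => ?_)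
            calc ∫⁻ γ, ‖α n * (Tk μ)^[n] f (g * γ)‖₊ ∂μ
                ≤ ∫⁻ _γ, ENNReal.ofReal (α n * C) ∂μ := by
                  refine lintegral_mono (fun γ => ?_)
                  rw [← ENNReal.ofReal_coe_nnreal, coe_nnnorm]
                  refine ENNReal.ofReal_le_ofReal ?_
                  rw [Real.norm_eq_abs, abs_mul, abs_of_nonneg (hα n)]
                  exact mul_le_mul_of_nonneg_left (Tk_iter_bdd μ hb n _) (hα n)
              _ = ENNReal.ofReal (α n * C) := by simp
      _ = ENNReal.ofReal C := by
            rw [← ENNReal.ofReal_tsum_of_nonneg (fun n => mul_nonneg (hα n) hC)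
              (((summable_alpha hα hsum)).mul_right C), tsum_mul_right, hsum, one_mul]

lemma Pfix_iter {f : G → ℝ} (hf : Measurable f) {C : ℝ} (hb : ∀ x, |f x| ≤ C)
    (hP : Pfix μ α f) (k : ℕ) : Pfix μ α ((Tk μ)^[k] f) := by
  induction k with
  | zero => exact hP
  | succ k ih =>
    rw [Function.iterate_succ_apply']
    exact Pfix_T μ hα hsum (Tk_iter_meas μ hf k) (Tk_iter_bdd μ hb k) ih

lemma key_step (hα1 : 0 < α 1) {u : G → ℝ} {C : ℝ} (hbu : ∀ x, |u x| ≤ C)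
    (hPu : Pfix μ α u) {s : ℝ} (hs : ∀ m x, (Tk μ)^[m] u x ≤ s)
    {g : G} {δ : ℝ} (hδ : 0 < δ) (hg : s - δ < u g) :
    s - δ / α 1 < Tk μ u g := by
  have hsummable : Summable (fun n => α n * (s - (Tk μ)^[n] u g)) := by
    have : (fun n => α n * (s - (Tk μ)^[n] u g))
        = fun n => α n * s - α n * (Tk μ)^[n] u g := by funext n; ring
    rw [this]
    exact ((summable_alpha hα hsum).mul_right s).sub (summable_term μ hα hsum hbu g)
  have htsum : ∑' n, α n * (s - (Tk μ)^[n] u g) = s - u g := by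
    have : (fun n => α n * (s - (Tk μ)^[n] u g))
        = fun n => α n * s - α n * (Tk μ)^[n] u g := by funext n; ring
    rw [this, Summable.tsum_sub ((summable_alpha hα hsum).mul_right s)
      (summable_term μ hα hsum hbu g), tsum_mul_right, hsum, one_mul, ← hPu g]
  have hle : α 1 * (s - (Tk μ)^[1] u g) ≤ s - u g := by
    rw [← htsum]
    exact Summable.le_tsum hsummable 1 (fun j _ => mul_nonneg (hα j) (sub_nonneg.2 (hs j g)))
  rw [Function.iterate_one] at hle
  have h2 : α 1 * (s - Tk μ u g) < δ := lt_of_le_of_lt hle (by linarith)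
  have h3 : s - Tk μ u g < δ / α 1 := by
    rw [lt_div_iff₀ hα1]; linarith [mul_comm (α 1) (s - Tk μ u g)]
  linarith

/-- Main lemma: a bounded measurable fixed point of the series operator is superharmonic. -/
lemma Tk_le_of_Pfix (hα1 : 0 < α 1) {f : G → ℝ} (hf : Measurable f) {C : ℝ}
    (hb : ∀ x, |f x| ≤ C) (hP : Pfix μ α f) : ∀ g, Tk μ f g ≤ f g := by
  classical
  set w : G → ℝ := fun g => Tk μ f g - f g with hw
  have hwmeas : Measurable w := (Tk_meas μ hf).sub hf
  have hwb : ∀ x, |w x| ≤ C + C := fun x =>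
    (abs_sub _ _).trans (add_le_add (Tk_bdd μ hb x) (hb x))
  have hiter : ∀ n, (Tk μ)^[n] w = fun g => (Tk μ)^[n+1] f g - (Tk μ)^[n] f g := by
    intro n
    induction n with
    | zero => simp [hw]
    | succ n ih =>
      rw [Function.iterate_succ_apply', ih,
        Tk_sub μ (Tk_iter_meas μ hf (n+1)) (Tk_iter_bdd μ hb (n+1))
          (Tk_iter_meas μ hf n) (Tk_iter_bdd μ hb n),
        ← Function.iterate_succ_apply' (Tk μ) (n+1), ← Function.iterate_succ_apply' (Tk μ) n]
  have hPw : Pfix μ α w := by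
    intro g
    have hterm : ∀ n : ℕ, α n * (Tk μ)^[n] w g
        = α n * (Tk μ)^[n] (Tk μ f) g - α n * (Tk μ)^[n] f g := by
      intro n
      rw [hiter n, ← Function.iterate_succ_apply]
      ring
    calc w g = (∑' n, α n * (Tk μ)^[n] (Tk μ f) g) - ∑' n, α n * (Tk μ)^[n] f g := by
          rw [← Pfix_T μ hα hsum hf hb hP g, ← hP g]
      _ = ∑' n, (α n * (Tk μ)^[n] (Tk μ f) g - α n * (Tk μ)^[n] f g) :=
          (Summable.tsum_sub (summable_term μ hα hsum (Tk_bdd μ hb) g)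
            (summable_term μ hα hsum hb g)).symm
      _ = ∑' n, α n * (Tk μ)^[n] w g := by simp_rw [hterm]
  have hrange_ne : (Set.range w).Nonempty := ⟨w 1, Set.mem_range_self 1⟩
  have hbdd : BddAbove (Set.range w) := by
    refine ⟨C + C, fun y hy => ?_⟩
    obtain ⟨x, rfl⟩ := hy
    exact (le_abs_self _).trans (hwb x)
  set s : ℝ := sSup (Set.range w) with hsdef
  have hws : ∀ g, w g ≤ s := fun g => le_csSup hbdd (Set.mem_range_self g)
  have hms : ∀ m g, (Tk μ)^[m] w g ≤ s := by
    intro m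
    induction m with
    | zero => exact hws
    | succ m ih =>
      intro g
      rw [Function.iterate_succ_apply']
      exact Tk_le_const μ (Tk_iter_meas μ hwmeas m) (Tk_iter_bdd μ hwb m) ih g
  have hα1le : α 1 ≤ 1 := by
    have := Summable.le_tsum (summable_alpha hα hsum) 1 (fun j _ => hα j)
    rwa [hsum] at this
  -- key estimate: N * s ≤ 2C for every N
  have hNs : ∀ N : ℕ, (N : ℝ) * s ≤ C + C := by
    intro N
    refine le_of_forall_pos_le_add (fun ε' hε' => ?_)
    set S : ℝ := ∑ k ∈ Finset.range N, (1 / α 1) ^ k with hS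
    have hSnn : 0 ≤ S := Finset.sum_nonneg fun k _ => pow_nonneg (by positivity) k
    set ε : ℝ := ε' / (S + 1) with hε
    have hεpos : 0 < ε := by positivity
    obtain ⟨y, ⟨g, rfl⟩, hy⟩ := exists_lt_of_lt_csSup hrange_ne
      (show s - ε < s by linarith)
    have hk : ∀ k, s - ε * (1 / α 1) ^ k < (Tk μ)^[k] w g := by
      intro k
      induction k with
      | zero => simpa using hy
      | succ k ih =>
        have hδ : 0 < ε * (1 / α 1) ^ k := by positivity
        have := key_step μ hα hsum hα1 (Tk_iter_bdd μ hwb k)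
          (Pfix_iter μ hα hsum hwmeas hwb hPw k)
          (fun m x => by
            rw [← Function.iterate_add_apply]
            exact hms (m + k) x) hδ ih
        rw [show (Tk μ)^[k+1] w = Tk μ ((Tk μ)^[k] w) from
          Function.iterate_succ_apply' _ _ _]
        have harith : ε * (1 / α 1) ^ k / α 1 = ε * (1 / α 1) ^ (k + 1) := by
          rw [pow_succ]; ring
        rwa [harith] at this
    have htel : ∑ k ∈ Finset.range N, (Tk μ)^[k] w g = (Tk μ)^[N] f g - f g := by
      have : ∀ k, (Tk μ)^[k] w g = (Tk μ)^[k+1] f g - (Tk μ)^[k] f g := fun k => by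
        rw [hiter k]
      simp only [this]
      simpa using Finset.sum_range_sub (fun n => (Tk μ)^[n] f g) N
    have hsum_le : ∑ k ∈ Finset.range N, (s - ε * (1 / α 1) ^ k)
        ≤ ∑ k ∈ Finset.range N, (Tk μ)^[k] w g :=
      Finset.sum_le_sum fun k _ => (hk k).le
    have hlhs : ∑ k ∈ Finset.range N, (s - ε * (1 / α 1) ^ k) = N * s - ε * S := by
      rw [Finset.sum_sub_distrib, Finset.sum_const, Finset.card_range, ← Finset.mul_sum, hS]
      ring_nf
    have hrhs : (Tk μ)^[N] f g - f g ≤ C + C := by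
      have h1 := Tk_iter_bdd μ hb N g
      have h2 := hb g
      have := abs_le.1 h1
      have := abs_le.1 h2
      linarith
    have hfinal : (N : ℝ) * s - ε * S ≤ C + C := by
      rw [← hlhs]
      exact hsum_le.trans (htel ▸ hrhs)
    have hεS : ε * S ≤ ε' := by
      rw [hε, div_mul_eq_mul_div, div_le_iff₀ (by positivity)]
      nlinarith
    linarith
  by_contra hc
  push_neg at hc
  obtain ⟨g, hg⟩ := hc
  have hwpos : 0 < w g := by simp only [hw]; linarith
  have hspos : 0 < s := lt_of_lt_of_le hwpos (hws g)
  obtain ⟨N, hN⟩ := exists_nat_gt ((C + C) / s)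
  have : C + C < N * s := by
    rw [div_lt_iff₀ hspos] at hN
    linarith
  linarith [hNs N]
end aux3

section aux4
variable {G : Type*} [Group G] [MeasurableSpace G] [MeasurableMul₂ G]
attribute [local instance] mconvPow_prob
variable (μ : Measure G) [IsProbabilityMeasure μ]
variable {α : ℕ → ℝ} (hα : ∀ n, 0 ≤ α n) (hsum : ∑' n, α n = 1)

include hα hsum

lemma real_iff (hα1 : 0 < α 1) {f : G → ℝ} (hf : Measurable f) {C : ℝ}
    (hb : ∀ x, |f x| ≤ C) :
    (∀ g, f g = Tk μ f g) ↔ Pfix μ α f := by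
  constructor
  · intro hharm g
    have hfix : Tk μ f = f := funext fun x => (hharm x).symm
    have hiter : ∀ n : ℕ, (Tk μ)^[n] f = f := fun n => Function.iterate_fixed hfix n
    simp_rw [hiter]
    rw [tsum_mul_right, hsum, one_mul]
  · intro hP g
    have hPn : Pfix μ α (fun x => -f x) := by
      intro x
      have hni : ∀ n : ℕ, (Tk μ)^[n] (fun y => -f y) = fun y => -(Tk μ)^[n] f y :=
        Tk_iter_neg μ f
      simp only [hni, mul_neg]
      rw [tsum_neg, ← hP x]
    have h1 : Tk μ f g ≤ f g := Tk_le_of_Pfix μ hα hsum hα1 hf hb hP g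
    have h2 : Tk μ (fun x => -f x) g ≤ -f g :=
      Tk_le_of_Pfix μ hα hsum hα1 hf.neg (fun x => by simpa using hb x) hPn g
    rw [Tk_neg] at h2
    simp only [neg_le_neg_iff] at h2
    linarith

lemma real_harmonic_iff_theta (hα1 : 0 < α 1) {f : G → ℝ} (hf : Measurable f) {C : ℝ}
    (hb : ∀ x, |f x| ≤ C) :
    (∀ g, f g = ∫ γ, f (g * γ) ∂μ) ↔
      (∀ g, f g = ∫ γ, f (g * γ)
        ∂(Measure.sum (fun n => ENNReal.ofReal (α n) • mconvPow μ n) : Measure G)) := by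
  have h1 : (∀ g, f g = Tk μ f g) ↔ Pfix μ α f := real_iff μ hα hsum hα1 hf hb
  have h2 : ∀ g : G, ∫ γ, f (g * γ)
      ∂(Measure.sum (fun n => ENNReal.ofReal (α n) • mconvPow μ n) : Measure G)
      = ∑' n, α n * (Tk μ)^[n] f g := integral_theta μ hα hsum hf hb
  constructor
  · intro H g
    rw [h2 g]
    exact (h1.mp H) g
  · intro H
    refine h1.mpr (fun g => ?_)
    rw [← h2 g]
    exact H g
end aux4

/-- splitting complex harmonicity into real and imaginary parts -/
lemma complex_split {G : Type*} [Group G] [MeasurableSpace G] [MeasurableMul₂ G]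
    (ν : Measure G) [IsProbabilityMeasure ν] {h : G → ℂ} (hmeas : Measurable h)
    {C : ℝ} (hC : ∀ g, ‖h g‖ ≤ C) (g : G) :
    (h g = ∫ γ, h (g * γ) ∂ν) ↔
      ((h g).re = ∫ γ, (h (g * γ)).re ∂ν ∧ (h g).im = ∫ γ, (h (g * γ)).im ∂ν) := by
  have hm : Measurable fun γ : G => h (g * γ) := hmeas.comp (measurable_const_mul g)
  have hint : Integrable (fun γ => h (g * γ)) ν :=
    int_bdd hm.aestronglyMeasurable (fun x => hC (g * x))
  have hre := integral_re (𝕜 := ℂ) hint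
  have him := integral_im (𝕜 := ℂ) hint
  simp only [RCLike.re_to_complex, RCLike.im_to_complex] at hre him
  rw [Complex.ext_iff, ← hre, ← him]

/-- a convex combination `θ = Σ α_n μ^{*n}` with `α_1 > 0` has the same bounded
harmonic functions as `μ`. -/
theorem stmt7 {G : Type*} [Group G] [MeasurableSpace G] [MeasurableMul₂ G]
    (μ : Measure G) [IsProbabilityMeasure μ]
    (α : ℕ → ℝ) (hα : ∀ n, 0 ≤ α n) (hsum : ∑' n, α n = 1) (hα1 : 0 < α 1)
    (θ : Measure G) (hθ : θ = Measure.sum (fun n => ENNReal.ofReal (α n) • mconvPow μ n))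
    (h : G → ℂ) (hmeas : Measurable h) (hbdd : ∃ C, ∀ g, ‖h g‖ ≤ C) :
    (∀ g, h g = ∫ γ, h (g * γ) ∂μ) ↔ (∀ g, h g = ∫ γ, h (g * γ) ∂θ) := by
  obtain ⟨C, hC⟩ := hbdd
  subst hθ
  haveI : IsProbabilityMeasure
      (Measure.sum (fun n => ENNReal.ofReal (α n) • mconvPow μ n) : Measure G) :=
    theta_prob μ hα hsum
  set fr : G → ℝ := fun x => (h x).re with hfr
  set fi : G → ℝ := fun x => (h x).im with hfi
  have hfrm : Measurable fr := Complex.measurable_re.comp hmeas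
  have hfim : Measurable fi := Complex.measurable_im.comp hmeas
  have hfrb : ∀ x, |fr x| ≤ C := fun x =>
    (Complex.abs_re_le_norm (h x)).trans (hC x)
  have hfib : ∀ x, |fi x| ≤ C := fun x =>
    (Complex.abs_im_le_norm (h x)).trans (hC x)
  have keyr := real_harmonic_iff_theta μ hα hsum hα1 hfrm hfrb
  have keyi := real_harmonic_iff_theta μ hα hsum hα1 hfim hfib
  constructor
  · intro H g
    have Hre : ∀ x, fr x = ∫ γ, fr (x * γ) ∂μ := fun x => ((complex_split μ hmeas hC x).mp (H x)).1
    have Him : ∀ x, fi x = ∫ γ, fi (x * γ) ∂μ := fun x => ((complex_split μ hmeas hC x).mp (H x)).2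
    exact (complex_split _ hmeas hC g).mpr ⟨keyr.mp Hre g, keyi.mp Him g⟩
  · intro H g
    have Hre : ∀ x, fr x = ∫ γ, fr (x * γ)
        ∂(Measure.sum (fun n => ENNReal.ofReal (α n) • mconvPow μ n) : Measure G) :=
      fun x => ((complex_split _ hmeas hC x).mp (H x)).1
    have Him : ∀ x, fi x = ∫ γ, fi (x * γ)
        ∂(Measure.sum (fun n => ENNReal.ofReal (α n) • mconvPow μ n) : Measure G) :=
      fun x => ((complex_split _ hmeas hC x).mp (H x)).2
    exact (complex_split μ hmeas hC g).mpr ⟨keyr.mpr Hre g, keyi.mpr Him g⟩
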